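/- Let H_* be the subalgebra of the convolution algebra H* generated by the counit ε and all infinitesimal characters of H. Then the transpose Δ_* = m^t of the multiplication of H (defined by (Δ_*ξ)(h⊗h') = ξ(hh')) maps H_* into H_*⊗H_* (viewed inside (H⊗H)*), is multiplicative on H_*, and is cocommutative on H_*: (Δ_*ξ)(h⊗h') = (Δ_*ξ)(h'⊗h) for all ξ∈H_* and h,h'∈H; with counit ξ↦ξ(1) and antipode the transpose S_* of S, H_* is a cocommutative Hopf algebra over k. -/

import Mathlib

open TensorProduct

universe u

/-- The convolution product on the algebraic dual `H →ₗ[R] R` of a coalgebra `H`: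
`⟨ξ * η, h⟩ = ⟨ξ ⊗ η, Δ h⟩`. -/
noncomputable def conv {R H : Type u} [CommSemiring R] [AddCommMonoid H] [Module R H]
    [Coalgebra R H] (ξ η : H →ₗ[R] R) : H →ₗ[R] R :=
  LinearMap.mul' R R ∘ₗ TensorProduct.map ξ η ∘ₗ Coalgebra.comul

/-- An infinitesimal character of `H`: an `R`-linear map `Z : H → R` with
`Z (hk) = Z h * ε k + ε h * Z k`. -/
def IsInfinitesimalCharacter {R H : Type u} [CommSemiring R] [Semiring H] [Module R H]
    [Coalgebra R H] (Z : H →ₗ[R] R) : Prop :=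
  ∀ a b : H, Z (a * b) = Z a * Coalgebra.counit b + Coalgebra.counit a * Z b

/-- `H_*`: the subalgebra of the convolution algebra `H*` generated by the counit `ε` and all
infinitesimal characters of `H`, i.e. the smallest subset of `H*` containing `ε` and the
infinitesimal characters and closed under addition, scalar multiplication and convolution. -/
noncomputable def Hstar (R H : Type u) [CommSemiring R] [Semiring H] [Module R H]
    [Coalgebra R H] : Set (H →ₗ[R] R) :=
  ⋂₀ {S : Set (H →ₗ[R] R) |
      (Coalgebra.counit : H →ₗ[R] R) ∈ S ∧
      (∀ Z : H →ₗ[R] R, IsInfinitesimalCharacter Z → Z ∈ S) ∧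
      (∀ ξ ∈ S, ∀ η ∈ S, ξ + η ∈ S) ∧
      (∀ (c : R), ∀ ξ ∈ S, c • ξ ∈ S) ∧
      (∀ ξ ∈ S, ∀ η ∈ S, conv ξ η ∈ S)}

/-- The transpose `Δ_* = mᵗ` of the multiplication of `H`, as a map `H* → (H ⊗ H)*`:
`(Δ_* ξ)(h ⊗ h') = ξ (h h')`. -/
noncomputable def mulTranspose {R H : Type u} [CommSemiring R] [Semiring H] [Algebra R H]
    (ξ : H →ₗ[R] R) : (H ⊗[R] H) →ₗ[R] R :=
  ξ ∘ₗ LinearMap.mul' R H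

section Aux

open Coalgebra HopfAlgebra

variable {R H : Type u} [CommRing R] [Ring H] [HopfAlgebra R H]

/-! ### Membership and induction for `Hstar` -/

lemma counit_mem_Hstar : (Coalgebra.counit : H →ₗ[R] R) ∈ Hstar R H :=
  Set.mem_sInter.2 fun _ hS => hS.1

lemma infChar_mem_Hstar {Z : H →ₗ[R] R} (hZ : IsInfinitesimalCharacter Z) : Z ∈ Hstar R H :=
  Set.mem_sInter.2 fun _ hS => hS.2.1 Z hZ

lemma add_mem_Hstar {ξ η : H →ₗ[R] R} (hξ : ξ ∈ Hstar R H) (hη : η ∈ Hstar R H) :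
    ξ + η ∈ Hstar R H :=
  Set.mem_sInter.2 fun S hS =>
    hS.2.2.1 ξ (Set.mem_sInter.1 hξ S hS) η (Set.mem_sInter.1 hη S hS)

lemma smul_mem_Hstar (c : R) {ξ : H →ₗ[R] R} (hξ : ξ ∈ Hstar R H) : c • ξ ∈ Hstar R H :=
  Set.mem_sInter.2 fun S hS => hS.2.2.2.1 c ξ (Set.mem_sInter.1 hξ S hS)

lemma conv_mem_Hstar {ξ η : H →ₗ[R] R} (hξ : ξ ∈ Hstar R H) (hη : η ∈ Hstar R H) :
    conv ξ η ∈ Hstar R H :=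
  Set.mem_sInter.2 fun S hS =>
    hS.2.2.2.2 ξ (Set.mem_sInter.1 hξ S hS) η (Set.mem_sInter.1 hη S hS)

lemma Hstar_induction {P : (H →ₗ[R] R) → Prop}
    (h1 : P Coalgebra.counit)
    (h2 : ∀ Z : H →ₗ[R] R, IsInfinitesimalCharacter Z → P Z)
    (h3 : ∀ ξ, ξ ∈ Hstar R H → P ξ → ∀ η, η ∈ Hstar R H → P η → P (ξ + η))
    (h4 : ∀ (c : R), ∀ ξ, ξ ∈ Hstar R H → P ξ → P (c • ξ))
    (h5 : ∀ ξ, ξ ∈ Hstar R H → P ξ → ∀ η, η ∈ Hstar R H → P η → P (conv ξ η)) :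
    ∀ ξ ∈ Hstar R H, P ξ := by
  intro ξ hξ
  have key : ξ ∈ {ζ : H →ₗ[R] R | ζ ∈ Hstar R H ∧ P ζ} :=
    Set.mem_sInter.1 hξ _
      ⟨⟨counit_mem_Hstar, h1⟩,
        fun Z hZ => ⟨infChar_mem_Hstar hZ, h2 Z hZ⟩,
        fun a ha b hb => ⟨add_mem_Hstar ha.1 hb.1, h3 a ha.1 ha.2 b hb.1 hb.2⟩,
        fun c a ha => ⟨smul_mem_Hstar c ha.1, h4 c a ha.1 ha.2⟩,
        fun a ha b hb => ⟨conv_mem_Hstar ha.1 hb.1, h5 a ha.1 ha.2 b hb.1 hb.2⟩⟩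
  exact key.2

/-! ### Basic computation rules for `conv` -/

lemma conv_repr (ξ η : H →ₗ[R] R) {a : H} {ι : Type*} (r : Coalgebra.Repr R a ι) :
    conv ξ η a = ∑ i ∈ r.index, ξ (r.left i) * η (r.right i) := by
  simp [conv, ← r.eq, map_sum]

lemma conv_counit_right (α : H →ₗ[R] R) : conv α Coalgebra.counit = α := by
  ext h
  rw [conv_repr α _ (ℛ R h)]
  have h0 := Coalgebra.sum_map_tmul_counit_eq (R := R) α h (repr := ℛ R h)
  have h1 := congrArg (LinearMap.mul' R R) h0
  rw [map_sum] at h1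
  simp only [LinearMap.mul'_apply, mul_one] at h1
  exact h1

lemma conv_counit_left (α : H →ₗ[R] R) : conv Coalgebra.counit α = α := by
  ext h
  rw [conv_repr _ α (ℛ R h)]
  have h0 := Coalgebra.sum_counit_tmul_map_eq (R := R) α h (repr := ℛ R h)
  have h1 := congrArg (LinearMap.mul' R R) h0
  rw [map_sum] at h1
  simp only [LinearMap.mul'_apply, one_mul] at h1
  exact h1

lemma conv_mul_repr (ξ η : H →ₗ[R] R) {a b : H} {ι κ : Type*} (r : Coalgebra.Repr R a ι)
    (r' : Coalgebra.Repr R b κ) :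
    conv ξ η (a * b) = ∑ i ∈ r.index, ∑ j ∈ r'.index,
      ξ (r.left i * r'.left j) * η (r.right i * r'.right j) := by
  have hc : Coalgebra.comul (R := R) (a * b) = ∑ i ∈ r.index, ∑ j ∈ r'.index,
      (r.left i * r'.left j) ⊗ₜ[R] (r.right i * r'.right j) := by
    rw [Bialgebra.comul_mul, ← r.eq, ← r'.eq, Finset.sum_mul_sum]
    simp [Algebra.TensorProduct.tmul_mul_tmul]
  simp only [conv, LinearMap.comp_apply, hc, map_sum, TensorProduct.map_tmul,
    LinearMap.mul'_apply]

/-! ### The counit and infinitesimal characters versus the antipode -/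

lemma counit_antipode_apply (h : H) :
    (Coalgebra.counit : H →ₗ[R] R) (antipode (R := R) h) = Coalgebra.counit h := by
  have h1 := congrArg (Coalgebra.counit : H →ₗ[R] R) (sum_antipode_mul_eq_algebraMap_counit (R := R) (ℛ R h))
  rw [map_sum] at h1
  simp only [Bialgebra.counit_mul, Bialgebra.counit_algebraMap] at h1
  have h2 := conv_repr ((Coalgebra.counit : H →ₗ[R] R) ∘ₗ antipode (R := R) (A := H))
    (Coalgebra.counit) (ℛ R h)
  rw [conv_counit_right] at h2
  simp only [LinearMap.comp_apply] at h2
  exact h2.trans h1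

lemma counit_comp_antipode :
    (Coalgebra.counit : H →ₗ[R] R) ∘ₗ antipode (R := R) (A := H) = Coalgebra.counit := by
  ext h; exact counit_antipode_apply h

lemma infChar_one {Z : H →ₗ[R] R} (hZ : IsInfinitesimalCharacter Z) : Z (1 : H) = 0 := by
  have h1 := hZ 1 1
  simp only [one_mul, Bialgebra.counit_one, mul_one] at h1
  exact left_eq_add.1 h1

lemma infChar_comp_antipode {Z : H →ₗ[R] R} (hZ : IsInfinitesimalCharacter Z) :
    Z ∘ₗ antipode (R := R) (A := H) = -Z := by
  ext h
  have h1 := congrArg Z (sum_antipode_mul_eq_algebraMap_counit (R := R) (ℛ R h))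
  rw [map_sum] at h1
  have hr : Z (algebraMap R H ((Coalgebra.counit : H →ₗ[R] R) h)) = 0 := by
    rw [Algebra.algebraMap_eq_smul_one, map_smul, infChar_one hZ, smul_zero]
  rw [hr] at h1
  have h2 : ∀ i ∈ (ℛ R h).index,
      Z (antipode (R := R) ((ℛ R h).left i) * (ℛ R h).right i)
        = Z (antipode (R := R) ((ℛ R h).left i)) * Coalgebra.counit ((ℛ R h).right i)
          + Coalgebra.counit ((ℛ R h).left i) * Z ((ℛ R h).right i) := by
    intro i _
    rw [hZ, counit_antipode_apply]
  rw [Finset.sum_congr rfl h2, Finset.sum_add_distrib] at h1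
  have e1 : ∑ i ∈ (ℛ R h).index,
      Z (antipode (R := R) ((ℛ R h).left i)) * Coalgebra.counit ((ℛ R h).right i)
        = Z (antipode (R := R) h) := by
    have h3 := conv_repr (Z ∘ₗ antipode (R := R) (A := H)) (Coalgebra.counit) (ℛ R h)
    rw [conv_counit_right] at h3
    simp only [LinearMap.comp_apply] at h3
    exact h3.symm
  have e2 : ∑ i ∈ (ℛ R h).index,
      Coalgebra.counit ((ℛ R h).left i) * Z ((ℛ R h).right i) = Z h := by
    have h3 := conv_repr (Coalgebra.counit) Z (ℛ R h)
    rw [conv_counit_left] at h3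
    exact h3.symm
  rw [e1, e2] at h1
  simp only [LinearMap.comp_apply, LinearMap.neg_apply]
  linear_combination h1

end Aux
section Conv2

open Coalgebra HopfAlgebra

variable {R H : Type u} [CommRing R] [Ring H] [HopfAlgebra R H]

/-- Convolution with values in an `R`-algebra `B`. -/
noncomputable def convA {B : Type u} [Ring B] [Algebra R B] (f g : H →ₗ[R] B) : H →ₗ[R] B :=
  LinearMap.mul' R B ∘ₗ TensorProduct.map f g ∘ₗ Coalgebra.comul

lemma convA_repr {B : Type u} [Ring B] [Algebra R B] (f g : H →ₗ[R] B) {a : H} {ι : Type*}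
    (r : Coalgebra.Repr R a ι) :
    convA f g a = ∑ i ∈ r.index, f (r.left i) * g (r.right i) := by
  simp [convA, ← r.eq, map_sum]

lemma convA_unit_left {B : Type u} [Ring B] [Algebra R B] (f : H →ₗ[R] B) :
    convA (Algebra.linearMap R B ∘ₗ (Coalgebra.counit : H →ₗ[R] R)) f = f := by
  ext h
  rw [convA_repr _ _ (ℛ R h)]
  have h0 := Coalgebra.sum_counit_tmul_map_eq (R := R) f h (repr := ℛ R h)
  have h1 := congrArg (TensorProduct.lid R B) h0
  rw [map_sum] at h1
  simp only [TensorProduct.lid_tmul, one_smul] at h1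
  have h2 : ∀ i ∈ (ℛ R h).index,
      (Algebra.linearMap R B ∘ₗ (Coalgebra.counit : H →ₗ[R] R)) ((ℛ R h).left i)
          * f ((ℛ R h).right i)
        = Coalgebra.counit ((ℛ R h).left i) • f ((ℛ R h).right i) := fun i _ => by
    rw [LinearMap.comp_apply, Algebra.linearMap_apply, ← Algebra.smul_def]
  rw [Finset.sum_congr rfl h2, h1]

lemma convA_unit_right {B : Type u} [Ring B] [Algebra R B] (f : H →ₗ[R] B) :
    convA f (Algebra.linearMap R B ∘ₗ (Coalgebra.counit : H →ₗ[R] R)) = f := by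
  ext h
  rw [convA_repr _ _ (ℛ R h)]
  have h0 := Coalgebra.sum_map_tmul_counit_eq (R := R) f h (repr := ℛ R h)
  have h1 := congrArg (TensorProduct.rid R B) h0
  rw [map_sum] at h1
  simp only [TensorProduct.rid_tmul, one_smul] at h1
  have h2 : ∀ i ∈ (ℛ R h).index,
      f ((ℛ R h).left i)
          * (Algebra.linearMap R B ∘ₗ (Coalgebra.counit : H →ₗ[R] R)) ((ℛ R h).right i)
        = Coalgebra.counit ((ℛ R h).right i) • f ((ℛ R h).left i) := fun i _ => by
    rw [LinearMap.comp_apply, Algebra.linearMap_apply, ← Algebra.commutes, ← Algebra.smul_def]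
  rw [Finset.sum_congr rfl h2, h1]

lemma convA_assoc {B : Type u} [Ring B] [Algebra R B] (f g k : H →ₗ[R] B) :
    convA (convA f g) k = convA f (convA g k) := by
  ext h
  have key := Coalgebra.sum_map_tmul_tmul_eq (R := R) f g k h (repr := ℛ R h)
      (a₁ := fun i => ℛ R ((ℛ R h).left i)) (a₂ := fun i => ℛ R ((ℛ R h).right i))
  have key2 := congrArg (LinearMap.mul' R B ∘ₗ LinearMap.lTensor B (LinearMap.mul' R B)) key
  simp only [map_sum, LinearMap.comp_apply, LinearMap.lTensor_tmul, LinearMap.mul'_apply]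
    at key2
  rw [convA_repr (convA f g) k (ℛ R h), convA_repr f (convA g k) (ℛ R h)]
  have eL : ∀ i ∈ (ℛ R h).index,
      convA f g ((ℛ R h).left i) * k ((ℛ R h).right i)
        = ∑ j ∈ (ℛ R ((ℛ R h).left i)).index,
            f ((ℛ R ((ℛ R h).left i)).left j)
              * (g ((ℛ R ((ℛ R h).left i)).right j) * k ((ℛ R h).right i)) := by
    intro i _
    rw [convA_repr f g (ℛ R ((ℛ R h).left i)), Finset.sum_mul]
    exact Finset.sum_congr rfl fun j _ => mul_assoc _ _ _
  have eR : ∀ i ∈ (ℛ R h).index,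
      f ((ℛ R h).left i) * convA g k ((ℛ R h).right i)
        = ∑ j ∈ (ℛ R ((ℛ R h).right i)).index,
            f ((ℛ R h).left i)
              * (g ((ℛ R ((ℛ R h).right i)).left j) * k ((ℛ R ((ℛ R h).right i)).right j)) := by
    intro i _
    rw [convA_repr g k (ℛ R ((ℛ R h).right i)), Finset.mul_sum]
  rw [Finset.sum_congr rfl eL, Finset.sum_congr rfl eR]
  exact key2.symm

end Conv2
section AntipodeAnti

open Coalgebra HopfAlgebra

variable {R H : Type u} [CommRing R] [Ring H] [HopfAlgebra R H]

/-- Auxiliary four-fold map: `p ⊗ (x ⊗ (y ⊗ z)) ↦ (S x * y) ⊗ (S p * z)`. -/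
noncomputable def XiMap (R H : Type u) [CommRing R] [Ring H] [HopfAlgebra R H] :
    H ⊗[R] (H ⊗[R] (H ⊗[R] H)) →ₗ[R] H ⊗[R] H :=
  TensorProduct.map (LinearMap.mul' R H) (LinearMap.mul' R H)
    ∘ₗ (TensorProduct.tensorTensorTensorComm R H H H H).toLinearMap
    ∘ₗ LinearMap.rTensor (H ⊗[R] H)
        ((TensorProduct.map (antipode (R := R) (A := H)) (antipode (R := R) (A := H)))
          ∘ₗ (TensorProduct.comm R H H).toLinearMap)
    ∘ₗ (TensorProduct.assoc R H H (H ⊗[R] H)).symm.toLinearMap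

lemma XiMap_tmul (p x y z : H) :
    XiMap R H (p ⊗ₜ[R] (x ⊗ₜ[R] (y ⊗ₜ[R] z)))
      = (antipode (R := R) x * y) ⊗ₜ[R] (antipode (R := R) p * z) := by
  simp [XiMap, TensorProduct.tensorTensorTensorComm_tmul]

lemma XiMap_tmul_mul (p x : H) (u : H ⊗[R] H) :
    XiMap R H (p ⊗ₜ[R] (x ⊗ₜ[R] u))
      = ((antipode (R := R) x) ⊗ₜ[R] (antipode (R := R) p)) * u := by
  induction u using TensorProduct.induction_on with
  | zero => rw [TensorProduct.tmul_zero, TensorProduct.tmul_zero, LinearMap.map_zero, mul_zero]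
  | tmul y z => rw [XiMap_tmul, Algebra.TensorProduct.tmul_mul_tmul]
  | add u v hu hv =>
      rw [TensorProduct.tmul_add, TensorProduct.tmul_add, map_add, hu, hv, mul_add]

lemma convA_D_F :
    convA (Coalgebra.comul : H →ₗ[R] H ⊗[R] H)
        ((Coalgebra.comul : H →ₗ[R] H ⊗[R] H) ∘ₗ antipode (R := R) (A := H))
      = Algebra.linearMap R (H ⊗[R] H) ∘ₗ (Coalgebra.counit : H →ₗ[R] R) := by
  ext h
  rw [convA_repr _ _ (ℛ R h), LinearMap.comp_apply, Algebra.linearMap_apply]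
  have h2 : ∀ i ∈ (ℛ R h).index,
      (Coalgebra.comul ((ℛ R h).left i) : H ⊗[R] H)
          * ((Coalgebra.comul : H →ₗ[R] H ⊗[R] H) ∘ₗ antipode (R := R) (A := H))
              ((ℛ R h).right i)
        = Coalgebra.comul ((ℛ R h).left i * antipode (R := R) ((ℛ R h).right i)) := by
    intro i _
    rw [LinearMap.comp_apply, ← Bialgebra.comul_mul]
  rw [Finset.sum_congr rfl h2, ← map_sum, sum_mul_antipode_eq_algebraMap_counit, Bialgebra.comul_algebraMap]

lemma convA_G_D :
    convA ((TensorProduct.comm R H H).toLinearMap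
          ∘ₗ TensorProduct.map (antipode (R := R) (A := H)) (antipode (R := R) (A := H))
          ∘ₗ Coalgebra.comul)
        (Coalgebra.comul : H →ₗ[R] H ⊗[R] H)
      = Algebra.linearMap R (H ⊗[R] H) ∘ₗ (Coalgebra.counit : H →ₗ[R] R) := by
  ext h
  rw [convA_repr _ _ (ℛ R h), LinearMap.comp_apply, Algebra.linearMap_apply]
  -- Step 1: rewrite each summand through `XiMap`.
  have step1 : ∀ i ∈ (ℛ R h).index,
      ((TensorProduct.comm R H H).toLinearMap
            ∘ₗ TensorProduct.map (antipode (R := R) (A := H)) (antipode (R := R) (A := H))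
            ∘ₗ Coalgebra.comul) ((ℛ R h).left i)
          * (Coalgebra.comul ((ℛ R h).right i) : H ⊗[R] H)
        = XiMap R H ((LinearMap.lTensor H (LinearMap.lTensor H
              (Coalgebra.comul : H →ₗ[R] H ⊗[R] H)))
            (∑ j ∈ (ℛ R ((ℛ R h).left i)).index,
              (ℛ R ((ℛ R h).left i)).left j
                ⊗ₜ[R] ((ℛ R ((ℛ R h).left i)).right j ⊗ₜ[R] (ℛ R h).right i))) := by
    intro i _
    rw [map_sum, map_sum]
    simp only [LinearMap.lTensor_tmul, XiMap_tmul_mul]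
    rw [← Finset.sum_mul]
    congr 1
    simp only [LinearMap.comp_apply]
    rw [← (ℛ R ((ℛ R h).left i)).eq]
    simp [map_sum]
  rw [Finset.sum_congr rfl step1, ← map_sum, ← map_sum,
    Coalgebra.sum_tmul_tmul_eq (ℛ R h) (fun i => ℛ R ((ℛ R h).left i))
      (fun i => ℛ R ((ℛ R h).right i))]
  simp only [map_sum, LinearMap.lTensor_tmul]
  -- now the goal is: ∑ i ∑ k, XiMap (l i ⊗ (tL i k ⊗ comul (tR i k))) = algebraMap (ε h)
  have step2 : ∀ i ∈ (ℛ R h).index,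
      (∑ k ∈ (ℛ R ((ℛ R h).right i)).index,
        XiMap R H ((ℛ R h).left i ⊗ₜ[R] ((ℛ R ((ℛ R h).right i)).left k
          ⊗ₜ[R] (Coalgebra.comul ((ℛ R ((ℛ R h).right i)).right k) : H ⊗[R] H))))
      = (1 : H) ⊗ₜ[R] (antipode (R := R) ((ℛ R h).left i) * (ℛ R h).right i) := by
    intro i _
    have inner1 : (∑ k ∈ (ℛ R ((ℛ R h).right i)).index,
          (ℛ R ((ℛ R h).right i)).left k
            ⊗ₜ[R] (Coalgebra.comul ((ℛ R ((ℛ R h).right i)).right k) : H ⊗[R] H))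
        = ∑ k ∈ (ℛ R ((ℛ R h).right i)).index,
            ∑ j ∈ (ℛ R ((ℛ R ((ℛ R h).right i)).left k)).index,
              (ℛ R ((ℛ R ((ℛ R h).right i)).left k)).left j
                ⊗ₜ[R] ((ℛ R ((ℛ R ((ℛ R h).right i)).left k)).right j
                  ⊗ₜ[R] (ℛ R ((ℛ R h).right i)).right k) := by
      refine Eq.trans (Finset.sum_congr rfl fun k _ => ?_)
        (Coalgebra.sum_tmul_tmul_eq (ℛ R ((ℛ R h).right i))
          (fun k => ℛ R ((ℛ R ((ℛ R h).right i)).left k))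
          (fun k => ℛ R ((ℛ R ((ℛ R h).right i)).right k))).symm
      rw [← (ℛ R ((ℛ R ((ℛ R h).right i)).right k)).eq, TensorProduct.tmul_sum]
    calc (∑ k ∈ (ℛ R ((ℛ R h).right i)).index,
          XiMap R H ((ℛ R h).left i ⊗ₜ[R] ((ℛ R ((ℛ R h).right i)).left k
            ⊗ₜ[R] (Coalgebra.comul ((ℛ R ((ℛ R h).right i)).right k) : H ⊗[R] H))))
        = XiMap R H ((ℛ R h).left i ⊗ₜ[R]
            (∑ k ∈ (ℛ R ((ℛ R h).right i)).index,
              (ℛ R ((ℛ R h).right i)).left k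
                ⊗ₜ[R] (Coalgebra.comul ((ℛ R ((ℛ R h).right i)).right k) : H ⊗[R] H))) := by
          rw [TensorProduct.tmul_sum, map_sum]
      _ = ∑ k ∈ (ℛ R ((ℛ R h).right i)).index,
            ∑ j ∈ (ℛ R ((ℛ R ((ℛ R h).right i)).left k)).index,
              XiMap R H ((ℛ R h).left i ⊗ₜ[R]
                ((ℛ R ((ℛ R ((ℛ R h).right i)).left k)).left j
                  ⊗ₜ[R] ((ℛ R ((ℛ R ((ℛ R h).right i)).left k)).right j
                    ⊗ₜ[R] (ℛ R ((ℛ R h).right i)).right k))) := by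
          rw [inner1]
          simp only [TensorProduct.tmul_sum, map_sum]
      _ = ∑ k ∈ (ℛ R ((ℛ R h).right i)).index,
            (algebraMap R H ((Coalgebra.counit : H →ₗ[R] R) ((ℛ R ((ℛ R h).right i)).left k)))
              ⊗ₜ[R] (antipode (R := R) ((ℛ R h).left i) * (ℛ R ((ℛ R h).right i)).right k) := by
          refine Finset.sum_congr rfl fun k _ => ?_
          rw [← sum_antipode_mul_eq_algebraMap_counit (R := R) (ℛ R ((ℛ R ((ℛ R h).right i)).left k)),
            TensorProduct.sum_tmul]
          exact Finset.sum_congr rfl fun j _ => by rw [XiMap_tmul]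
      _ = (1 : H) ⊗ₜ[R] (antipode (R := R) ((ℛ R h).left i) * (ℛ R h).right i) := by
          have hcu : (∑ k ∈ (ℛ R ((ℛ R h).right i)).index,
                (Coalgebra.counit : H →ₗ[R] R) ((ℛ R ((ℛ R h).right i)).left k)
                  • (ℛ R ((ℛ R h).right i)).right k) = (ℛ R h).right i := by
            have h0 := Coalgebra.sum_counit_tmul_eq (R := R) (ℛ R ((ℛ R h).right i))
            have h1 := congrArg (TensorProduct.lid R H) h0
            rw [map_sum] at h1
            simp only [TensorProduct.lid_tmul, one_smul] at h1
            exact h1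
          calc (∑ k ∈ (ℛ R ((ℛ R h).right i)).index,
                (algebraMap R H ((Coalgebra.counit : H →ₗ[R] R)
                    ((ℛ R ((ℛ R h).right i)).left k)))
                  ⊗ₜ[R] (antipode (R := R) ((ℛ R h).left i)
                    * (ℛ R ((ℛ R h).right i)).right k))
              = ∑ k ∈ (ℛ R ((ℛ R h).right i)).index,
                  (1 : H) ⊗ₜ[R] ((Coalgebra.counit : H →ₗ[R] R)
                      ((ℛ R ((ℛ R h).right i)).left k)
                    • (antipode (R := R) ((ℛ R h).left i)
                      * (ℛ R ((ℛ R h).right i)).right k)) := by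
                refine Finset.sum_congr rfl fun k _ => ?_
                rw [Algebra.algebraMap_eq_smul_one, TensorProduct.smul_tmul]
            _ = (1 : H) ⊗ₜ[R] (antipode (R := R) ((ℛ R h).left i)
                  * (∑ k ∈ (ℛ R ((ℛ R h).right i)).index,
                      (Coalgebra.counit : H →ₗ[R] R) ((ℛ R ((ℛ R h).right i)).left k)
                        • (ℛ R ((ℛ R h).right i)).right k)) := by
                rw [Finset.mul_sum, TensorProduct.tmul_sum]
                exact Finset.sum_congr rfl fun k _ => by rw [mul_smul_comm]
            _ = (1 : H) ⊗ₜ[R] (antipode (R := R) ((ℛ R h).left i) * (ℛ R h).right i) := by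
                rw [hcu]
  rw [Finset.sum_congr rfl step2, ← TensorProduct.tmul_sum, sum_antipode_mul_eq_algebraMap_counit,
    Algebra.algebraMap_eq_smul_one (A := H), TensorProduct.tmul_smul,
    ← Algebra.TensorProduct.one_def, ← Algebra.algebraMap_eq_smul_one]

/-- The antipode is an anti-coalgebra morphism: `Δ ∘ S = τ ∘ (S ⊗ S) ∘ Δ`. -/
lemma comul_comp_antipode :
    (Coalgebra.comul : H →ₗ[R] H ⊗[R] H) ∘ₗ antipode (R := R) (A := H)
      = (TensorProduct.comm R H H).toLinearMap
          ∘ₗ TensorProduct.map (antipode (R := R) (A := H)) (antipode (R := R) (A := H))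
          ∘ₗ Coalgebra.comul := by
  have main : (TensorProduct.comm R H H).toLinearMap
        ∘ₗ TensorProduct.map (antipode (R := R) (A := H)) (antipode (R := R) (A := H))
        ∘ₗ Coalgebra.comul
      = (Coalgebra.comul : H →ₗ[R] H ⊗[R] H) ∘ₗ antipode (R := R) (A := H) := by
    calc (TensorProduct.comm R H H).toLinearMap
          ∘ₗ TensorProduct.map (antipode (R := R) (A := H)) (antipode (R := R) (A := H))
          ∘ₗ Coalgebra.comul
        = convA ((TensorProduct.comm R H H).toLinearMap
              ∘ₗ TensorProduct.map (antipode (R := R) (A := H)) (antipode (R := R) (A := H))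
              ∘ₗ Coalgebra.comul)
            (Algebra.linearMap R (H ⊗[R] H) ∘ₗ (Coalgebra.counit : H →ₗ[R] R)) :=
          (convA_unit_right _).symm
      _ = convA ((TensorProduct.comm R H H).toLinearMap
              ∘ₗ TensorProduct.map (antipode (R := R) (A := H)) (antipode (R := R) (A := H))
              ∘ₗ Coalgebra.comul)
            (convA (Coalgebra.comul : H →ₗ[R] H ⊗[R] H)
              ((Coalgebra.comul : H →ₗ[R] H ⊗[R] H) ∘ₗ antipode (R := R) (A := H))) := by
          rw [convA_D_F]
      _ = convA (convA ((TensorProduct.comm R H H).toLinearMap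
              ∘ₗ TensorProduct.map (antipode (R := R) (A := H)) (antipode (R := R) (A := H))
              ∘ₗ Coalgebra.comul)
            (Coalgebra.comul : H →ₗ[R] H ⊗[R] H))
            ((Coalgebra.comul : H →ₗ[R] H ⊗[R] H) ∘ₗ antipode (R := R) (A := H)) :=
          (convA_assoc _ _ _).symm
      _ = convA (Algebra.linearMap R (H ⊗[R] H) ∘ₗ (Coalgebra.counit : H →ₗ[R] R))
            ((Coalgebra.comul : H →ₗ[R] H ⊗[R] H) ∘ₗ antipode (R := R) (A := H)) := by
          rw [convA_G_D]
      _ = (Coalgebra.comul : H →ₗ[R] H ⊗[R] H) ∘ₗ antipode (R := R) (A := H) :=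
          convA_unit_left _
  exact main.symm

lemma conv_comp_antipode (ξ η : H →ₗ[R] R) :
    conv ξ η ∘ₗ antipode (R := R) (A := H)
      = conv (η ∘ₗ antipode (R := R) (A := H)) (ξ ∘ₗ antipode (R := R) (A := H)) := by
  ext h
  have hc : Coalgebra.comul (R := R) (antipode (R := R) (A := H) h)
      = (TensorProduct.comm R H H)
          (TensorProduct.map (antipode (R := R) (A := H)) (antipode (R := R) (A := H))
            (Coalgebra.comul h)) := by
    have := congrArg (fun φ : H →ₗ[R] H ⊗[R] H => φ h) comul_comp_antipode
    simpa using this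
  simp only [LinearMap.comp_apply, conv]
  rw [hc, ← (ℛ R h).eq]
  simp only [map_sum, TensorProduct.map_tmul, TensorProduct.comm_tmul, LinearMap.mul'_apply]
  simp only [LinearMap.comp_apply]
  exact Finset.sum_congr rfl fun i _ => mul_comm _ _

lemma Hstar_antipode :
    ∀ ξ ∈ Hstar R H, ξ ∘ₗ antipode (R := R) (A := H) ∈ Hstar R H := by
  refine Hstar_induction ?_ ?_ ?_ ?_ ?_
  · rw [_root_.counit_comp_antipode]; exact counit_mem_Hstar
  · intro Z hZ
    rw [infChar_comp_antipode hZ, ← neg_one_smul R Z]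
    exact smul_mem_Hstar (-1) (infChar_mem_Hstar hZ)
  · intro ξ _ hξ η _ hη
    rw [LinearMap.add_comp]; exact add_mem_Hstar hξ hη
  · intro c ξ _ hξ
    rw [LinearMap.smul_comp]; exact smul_mem_Hstar c hξ
  · intro ξ _ hξ η _ hη
    rw [conv_comp_antipode]; exact conv_mem_Hstar hη hξ

end AntipodeAnti
section MainAux

open Coalgebra HopfAlgebra

variable {R H : Type u} [CommRing R] [Ring H] [HopfAlgebra R H]

/-! ### Cocommutativity on `Hstar` -/

lemma Hstar_cocomm : ∀ ξ ∈ Hstar R H, ∀ a b : H, ξ (a * b) = ξ (b * a) := by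
  refine Hstar_induction ?_ ?_ ?_ ?_ ?_
  · intro a b
    rw [Bialgebra.counit_mul, Bialgebra.counit_mul, mul_comm]
  · intro Z hZ a b
    rw [hZ, hZ]; ring
  · intro ξ _ hξ η _ hη a b
    simp only [LinearMap.add_apply, hξ a b, hη a b]
  · intro c ξ _ hξ a b
    simp only [LinearMap.smul_apply, hξ a b]
  · intro ξ _ hξ η _ hη a b
    rw [conv_mul_repr ξ η (ℛ R a) (ℛ R b), conv_mul_repr ξ η (ℛ R b) (ℛ R a),
      Finset.sum_comm]
    exact Finset.sum_congr rfl fun i _ => Finset.sum_congr rfl fun j _ => by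
      rw [hξ, hη]

/-! ### Multiplicativity of `Δ_*` -/

lemma comul_tmul (a b : H) :
    Coalgebra.comul (R := R) (a ⊗ₜ[R] b)
      = TensorProduct.tensorTensorTensorComm R H H H H
          (Coalgebra.comul a ⊗ₜ[R] Coalgebra.comul b) := rfl

lemma mulTranspose_conv (ξ η : H →ₗ[R] R) :
    mulTranspose (conv ξ η) = conv (mulTranspose ξ) (mulTranspose η) := by
  refine TensorProduct.ext' fun a b => ?_
  have hc : Coalgebra.comul (R := R) (a ⊗ₜ[R] b)
      = ∑ i ∈ (ℛ R a).index, ∑ j ∈ (ℛ R b).index,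
          ((ℛ R a).left i ⊗ₜ[R] (ℛ R b).left j)
            ⊗ₜ[R] ((ℛ R a).right i ⊗ₜ[R] (ℛ R b).right j) := by
    rw [_root_.comul_tmul, ← (ℛ R a).eq, ← (ℛ R b).eq, TensorProduct.sum_tmul]
    rw [map_sum]
    refine Finset.sum_congr rfl fun i _ => ?_
    rw [TensorProduct.tmul_sum, map_sum]
    exact Finset.sum_congr rfl fun j _ => by
      rw [TensorProduct.tensorTensorTensorComm_tmul]
  have hR : conv (mulTranspose ξ) (mulTranspose η) (a ⊗ₜ[R] b)
      = ∑ i ∈ (ℛ R a).index, ∑ j ∈ (ℛ R b).index,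
          ξ ((ℛ R a).left i * (ℛ R b).left j) * η ((ℛ R a).right i * (ℛ R b).right j) := by
    simp only [conv, LinearMap.comp_apply]
    rw [hc]
    simp only [map_sum, TensorProduct.map_tmul, LinearMap.mul'_apply]
    refine Finset.sum_congr rfl fun i _ => Finset.sum_congr rfl fun j _ => ?_
    simp [mulTranspose]
  have hL : mulTranspose (conv ξ η) (a ⊗ₜ[R] b) = conv ξ η (a * b) := by
    simp [mulTranspose]
  rw [hL, hR, conv_mul_repr ξ η (ℛ R a) (ℛ R b)]

/-! ### Decomposition of `Δ_* ξ` for `ξ ∈ Hstar` -/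

private lemma sum_swap4 {ι κ : Type*} {m n : ℕ} (I : Finset ι) (K : Finset κ)
    (T : ι → κ → Fin m → Fin n → R) :
    ∑ α ∈ I, ∑ β ∈ K, ∑ i : Fin m, ∑ j : Fin n, T α β i j
      = ∑ i : Fin m, ∑ j : Fin n, ∑ α ∈ I, ∑ β ∈ K, T α β i j := by
  have s1 : ∀ α, (∑ β ∈ K, ∑ i : Fin m, ∑ j : Fin n, T α β i j)
      = ∑ i : Fin m, ∑ β ∈ K, ∑ j : Fin n, T α β i j := fun α => Finset.sum_comm
  rw [Finset.sum_congr rfl fun α _ => s1 α, Finset.sum_comm]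
  refine Finset.sum_congr rfl fun i _ => ?_
  have s2 : ∀ α, (∑ β ∈ K, ∑ j : Fin n, T α β i j)
      = ∑ j : Fin n, ∑ β ∈ K, T α β i j := fun α => Finset.sum_comm
  rw [Finset.sum_congr rfl fun α _ => s2 α, Finset.sum_comm]

lemma Hstar_decomp : ∀ ξ ∈ Hstar R H, ∃ (m : ℕ) (f g : Fin m → (H →ₗ[R] R)),
    (∀ i, f i ∈ Hstar R H) ∧ (∀ i, g i ∈ Hstar R H) ∧
    ∀ a b : H, ξ (a * b) = ∑ i, f i a * g i b := by
  refine Hstar_induction ?_ ?_ ?_ ?_ ?_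
  · refine ⟨1, fun _ => Coalgebra.counit, fun _ => Coalgebra.counit,
      fun _ => counit_mem_Hstar, fun _ => counit_mem_Hstar, fun a b => ?_⟩
    simp
  · intro Z hZ
    refine ⟨2, ![Z, Coalgebra.counit], ![Coalgebra.counit, Z], ?_, ?_, fun a b => ?_⟩
    · intro i
      fin_cases i
      · exact infChar_mem_Hstar hZ
      · exact counit_mem_Hstar
    · intro i
      fin_cases i
      · exact counit_mem_Hstar
      · exact infChar_mem_Hstar hZ
    · rw [hZ]
      simp [Fin.sum_univ_two]
  · rintro ξ _ ⟨m, f, g, hf, hg, hd⟩ η _ ⟨n, p, q, hp, hq, hd'⟩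
    refine ⟨m + n, Fin.append f p, Fin.append g q, ?_, ?_, fun a b => ?_⟩
    · intro i
      refine Fin.addCases (fun i => ?_) (fun i => ?_) i
      · rw [Fin.append_left]; exact hf i
      · rw [Fin.append_right]; exact hp i
    · intro i
      refine Fin.addCases (fun i => ?_) (fun i => ?_) i
      · rw [Fin.append_left]; exact hg i
      · rw [Fin.append_right]; exact hq i
    · rw [Fin.sum_univ_add]
      simp only [Fin.append_left, Fin.append_right, LinearMap.add_apply]
      rw [hd a b, hd' a b]
  · rintro c ξ _ ⟨m, f, g, hf, hg, hd⟩
    refine ⟨m, fun i => c • f i, g, fun i => smul_mem_Hstar c (hf i), hg, fun a b => ?_⟩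
    simp only [LinearMap.smul_apply, smul_eq_mul]
    rw [hd a b, Finset.mul_sum]
    exact Finset.sum_congr rfl fun i _ => by ring
  · rintro ξ _ ⟨m, f, g, hf, hg, hd⟩ η _ ⟨n, p, q, hp, hq, hd'⟩
    refine ⟨m * n,
      fun k => conv (f (finProdFinEquiv.symm k).1) (p (finProdFinEquiv.symm k).2),
      fun k => conv (g (finProdFinEquiv.symm k).1) (q (finProdFinEquiv.symm k).2),
      fun k => conv_mem_Hstar (hf _) (hp _),
      fun k => conv_mem_Hstar (hg _) (hq _), fun a b => ?_⟩
    have reindex : (∑ k : Fin (m * n),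
          conv (f (finProdFinEquiv.symm k).1) (p (finProdFinEquiv.symm k).2) a
            * conv (g (finProdFinEquiv.symm k).1) (q (finProdFinEquiv.symm k).2) b)
        = ∑ i : Fin m, ∑ j : Fin n, conv (f i) (p j) a * conv (g i) (q j) b := by
      rw [← Equiv.sum_comp finProdFinEquiv
        (fun k => conv (f (finProdFinEquiv.symm k).1) (p (finProdFinEquiv.symm k).2) a
          * conv (g (finProdFinEquiv.symm k).1) (q (finProdFinEquiv.symm k).2) b)]
      simp only [Equiv.symm_apply_apply]
      exact Fintype.sum_prod_type _
    rw [reindex, conv_mul_repr ξ η (ℛ R a) (ℛ R b)]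
    have expand : ∀ α ∈ (ℛ R a).index, ∀ β ∈ (ℛ R b).index,
        ξ ((ℛ R a).left α * (ℛ R b).left β) * η ((ℛ R a).right α * (ℛ R b).right β)
          = ∑ i : Fin m, ∑ j : Fin n,
              (f i ((ℛ R a).left α) * g i ((ℛ R b).left β))
                * (p j ((ℛ R a).right α) * q j ((ℛ R b).right β)) := by
      intro α _ β _
      rw [hd, hd', Finset.sum_mul_sum]
    rw [Finset.sum_congr rfl fun α hα => Finset.sum_congr rfl fun β hβ => expand α hα β hβ,
      sum_swap4]
    refine Finset.sum_congr rfl fun i _ => Finset.sum_congr rfl fun j _ => ?_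
    rw [conv_repr (f i) (p j) (ℛ R a), conv_repr (g i) (q j) (ℛ R b), Finset.sum_mul_sum]
    exact Finset.sum_congr rfl fun α _ => Finset.sum_congr rfl fun β _ => by ring

/-! ### The antipode identities for a decomposition -/

lemma decomp_antipode_left (ξ : H →ₗ[R] R) (m : ℕ) (f g : Fin m → (H →ₗ[R] R))
    (hd : ∀ a b : H, ξ (a * b) = ∑ i, f i a * g i b) :
    (∑ i, conv (f i ∘ₗ antipode (R := R) (A := H)) (g i))
      = ξ 1 • (Coalgebra.counit : H →ₗ[R] R) := by
  ext h
  rw [LinearMap.sum_apply, LinearMap.smul_apply]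
  calc (∑ i : Fin m, conv (f i ∘ₗ antipode (R := R) (A := H)) (g i) h)
      = ∑ i : Fin m, ∑ α ∈ (ℛ R h).index,
          f i (antipode (R := R) ((ℛ R h).left α)) * g i ((ℛ R h).right α) := by
        refine Finset.sum_congr rfl fun i _ => ?_
        rw [conv_repr _ _ (ℛ R h)]
        simp only [LinearMap.comp_apply]
    _ = ∑ α ∈ (ℛ R h).index, ∑ i : Fin m,
          f i (antipode (R := R) ((ℛ R h).left α)) * g i ((ℛ R h).right α) :=
        Finset.sum_comm
    _ = ∑ α ∈ (ℛ R h).index,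
          ξ (antipode (R := R) ((ℛ R h).left α) * (ℛ R h).right α) := by
        exact Finset.sum_congr rfl fun α _ => (hd _ _).symm
    _ = ξ (∑ α ∈ (ℛ R h).index,
          antipode (R := R) ((ℛ R h).left α) * (ℛ R h).right α) := (map_sum ξ _ _).symm
    _ = ξ 1 • Coalgebra.counit h := by
        rw [sum_antipode_mul_eq_algebraMap_counit, Algebra.algebraMap_eq_smul_one, map_smul]
        simp [mul_comm]

lemma decomp_antipode_right (ξ : H →ₗ[R] R) (m : ℕ) (f g : Fin m → (H →ₗ[R] R))
    (hd : ∀ a b : H, ξ (a * b) = ∑ i, f i a * g i b) :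
    (∑ i, conv (f i) (g i ∘ₗ antipode (R := R) (A := H)))
      = ξ 1 • (Coalgebra.counit : H →ₗ[R] R) := by
  ext h
  rw [LinearMap.sum_apply, LinearMap.smul_apply]
  calc (∑ i : Fin m, conv (f i) (g i ∘ₗ antipode (R := R) (A := H)) h)
      = ∑ i : Fin m, ∑ α ∈ (ℛ R h).index,
          f i ((ℛ R h).left α) * g i (antipode (R := R) ((ℛ R h).right α)) := by
        refine Finset.sum_congr rfl fun i _ => ?_
        rw [conv_repr _ _ (ℛ R h)]
        simp only [LinearMap.comp_apply]
    _ = ∑ α ∈ (ℛ R h).index, ∑ i : Fin m,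
          f i ((ℛ R h).left α) * g i (antipode (R := R) ((ℛ R h).right α)) :=
        Finset.sum_comm
    _ = ∑ α ∈ (ℛ R h).index,
          ξ ((ℛ R h).left α * antipode (R := R) ((ℛ R h).right α)) := by
        exact Finset.sum_congr rfl fun α _ => (hd _ _).symm
    _ = ξ (∑ α ∈ (ℛ R h).index,
          (ℛ R h).left α * antipode (R := R) ((ℛ R h).right α)) := (map_sum ξ _ _).symm
    _ = ξ 1 • Coalgebra.counit h := by
        rw [sum_mul_antipode_eq_algebraMap_counit, Algebra.algebraMap_eq_smul_one, map_smul]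
        simp [mul_comm]

end MainAux

/-- `H_*` is a cocommutative Hopf algebra: `Δ_* = mᵗ` maps `H_*` into `H_* ⊗ H_*` (each
`Δ_* ξ`, `ξ ∈ H_*`, is a finite sum of products of pairs of elements of `H_*`), `Δ_*` is
multiplicative on `H_*` (with respect to the convolution product on `(H ⊗ H)*` coming from
the tensor-product coalgebra structure on `H ⊗ H`), `Δ_*` is cocommutative on `H_*`, the
counit `ξ ↦ ξ(1)` is multiplicative with value `1` on `ε`, `H_*` is stable under the
antipode `S_* : ξ ↦ ξ ∘ S`, and `S_*` satisfies the antipode axiom with respect to the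
tensor decompositions of `Δ_* ξ` and the counit `ξ ↦ ξ(1)`. -/
theorem Hstar_is_cocommutative_HopfAlgebra
    {R H : Type u} [Field R] [CharZero R] [Ring H] [HopfAlgebra R H] :
    -- `Δ_*` is multiplicative on `H_*`
    (∀ ξ ∈ Hstar R H, ∀ η ∈ Hstar R H,
      mulTranspose (conv ξ η) = conv (mulTranspose ξ) (mulTranspose η)) ∧
    -- `Δ_*` is cocommutative on `H_*`
    (∀ ξ ∈ Hstar R H, ∀ h h' : H, mulTranspose ξ (h ⊗ₜ[R] h') = mulTranspose ξ (h' ⊗ₜ[R] h)) ∧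
    -- the counit `ξ ↦ ξ(1)` is an algebra map on `H_*`
    ((Coalgebra.counit : H →ₗ[R] R) 1 = 1 ∧
      ∀ ξ ∈ Hstar R H, ∀ η ∈ Hstar R H, conv ξ η 1 = ξ 1 * η 1) ∧
    -- `H_*` is stable under `S_*`
    (∀ ξ ∈ Hstar R H, ξ ∘ₗ HopfAlgebra.antipode (R := R) (A := H) ∈ Hstar R H) ∧
    -- `Δ_*` maps `H_*` into `H_* ⊗ H_*`, and with this decomposition `S_*` satisfies the
    -- antipode axiom with counit `ξ ↦ ξ(1)`
    (∀ ξ ∈ Hstar R H, ∃ (m : ℕ) (f g : Fin m → (H →ₗ[R] R)),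
      (∀ i, f i ∈ Hstar R H) ∧ (∀ i, g i ∈ Hstar R H) ∧
      (∀ h h' : H, ξ (h * h') = ∑ i, f i h * g i h') ∧
      (∑ i, conv (f i ∘ₗ HopfAlgebra.antipode (R := R) (A := H)) (g i))
        = ξ 1 • (Coalgebra.counit : H →ₗ[R] R) ∧
      (∑ i, conv (f i) (g i ∘ₗ HopfAlgebra.antipode (R := R) (A := H)))
        = ξ 1 • (Coalgebra.counit : H →ₗ[R] R)) := by
  refine ⟨fun ξ _ η _ => mulTranspose_conv ξ η, ?_, ⟨Bialgebra.counit_one, ?_⟩, ?_, ?_⟩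
  · intro ξ hξ h h'
    simpa [mulTranspose] using Hstar_cocomm ξ hξ h h'
  · intro ξ _ η _
    simp [conv, Algebra.TensorProduct.one_def]
  · exact Hstar_antipode
  · intro ξ hξ
    obtain ⟨m, f, g, hf, hg, hd⟩ := Hstar_decomp ξ hξ
    exact ⟨m, f, g, hf, hg, hd, decomp_antipode_left ξ m f g hd,
      decomp_antipode_right ξ m f g hd⟩
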